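/- For finite graded posets P and Q with 0̂ and 1̂, the flag polynomial of the join P * Q equals the product of the flag polynomials: Υ_{P*Q}(a,b) = Υ_P(a,b) · Υ_Q(a,b) in the noncommutative polynomial ring ℤ⟨a,b⟩. -/

import Mathlib

open Polynomial

noncomputable section

/-- The noncommutative polynomial ring ℤ⟨a,b⟩. -/
abbrev FA : Type := FreeAlgebra ℤ (Fin 2)

/-- The variable `a`. -/
def aV : FA := FreeAlgebra.ι ℤ 0

/-- The variable `b`. -/
def bV : FA := FreeAlgebra.ι ℤ 1

/-- `c = a + b`. -/
def cV : FA := aV + bV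

/-- `d = ab + ba`. -/
def dV : FA := aV * bV + bV * aV

/-- The ab-monomial `u_S` of length `n`: the `i`-th letter (for `1 ≤ i ≤ n`)
is `b` if `i ∈ S` and `a` otherwise. -/
def abWord (n : ℕ) (S : Finset ℕ) : FA :=
  ((List.range n).map (fun i => if i + 1 ∈ S then bV else aV)).prod

section PosetDefs

variable {P : Type*} [PartialOrder P]

/-- `ρ` is a rank function exhibiting `P` as a graded poset with `0̂` and `1̂` of rank `n`. -/
def IsGradedOfRank (ρ : P → ℕ) (n : ℕ) : Prop :=
  (∃ b : P, IsBot b ∧ ρ b = 0) ∧ (∃ t : P, IsTop t ∧ ρ t = n) ∧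
    ∀ x y : P, x ⋖ y → ρ y = ρ x + 1

/-- `P` (with rank function `ρ`) is an Eulerian poset of rank `n`: it is graded of rank `n`
with `0̂` and `1̂` and every nonempty interval contains equally many elements of even and of
odd rank. -/
def IsEulerianRank (ρ : P → ℕ) (n : ℕ) : Prop :=
  IsGradedOfRank ρ n ∧
    ∀ s t : P, s ≤ t →
      {x : P | s ≤ x ∧ x ≤ t ∧ Even (ρ x)}.ncard =
        {x : P | s ≤ x ∧ x ≤ t ∧ Odd (ρ x)}.ncard

/-- The flag f-vector: `flagAlpha ρ S` is the number of maximal chains of the rank-selected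
subposet `P_S`, i.e. the number of chains of `P` whose set of ranks is exactly `S`. -/
def flagAlpha (ρ : P → ℕ) (S : Finset ℕ) : ℕ :=
  {C : Finset P | IsChain (· ≤ ·) (C : Set P) ∧ C.image ρ = S}.ncard

/-- The flag h-vector: `β_P(S) = Σ_{T ⊆ S} (-1)^{|S \ T|} α_P(T)`. -/
def flagBeta (ρ : P → ℕ) (S : Finset ℕ) : ℤ :=
  ∑ T ∈ S.powerset, (-1 : ℤ) ^ (S.card - T.card) * (flagAlpha ρ T : ℤ)

/-- The flag polynomial `Υ_P(a,b) = Σ_{S ⊆ [n]} α_P(S) u_S` of a rank `n+1` graded poset. -/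
def flagPoly (ρ : P → ℕ) (n : ℕ) : FA :=
  ∑ S ∈ (Finset.Icc 1 n).powerset, (flagAlpha ρ S : ℤ) • abWord n S

/-- The ab-index `Ψ_P(a,b) = Σ_{S ⊆ [n]} β_P(S) u_S` of a rank `n+1` graded poset. -/
def abIndex (ρ : P → ℕ) (n : ℕ) : FA :=
  ∑ S ∈ (Finset.Icc 1 n).powerset, flagBeta ρ S • abWord n S

end PosetDefs

section Join

variable (P Q : Type*) [PartialOrder P] [PartialOrder Q] [OrderTop P] [OrderBot Q]

/-- The join `P * Q` of two bounded posets: `(P \ {1̂}) ∪ (Q \ {0̂})`, where the order within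
each part is inherited and every element of `P \ {1̂}` lies below every element of
`Q \ {0̂}`. -/
def PosetJoin : Type _ := {x : P // x ≠ ⊤} ⊕ₗ {y : Q // y ≠ ⊥}

instance : PartialOrder (PosetJoin P Q) := by unfold PosetJoin; infer_instance

variable {P Q}

/-- The rank function on the join `P * Q`, where `s` is one less than the rank of `P`:
elements coming from `P` keep their rank, elements coming from `Q` have their rank
shifted up by `s`. -/
def joinRank (ρP : P → ℕ) (ρQ : Q → ℕ) (s : ℕ) : PosetJoin P Q → ℕ :=
  fun z => Sum.elim (fun x => ρP x.1) (fun y => ρQ y.1 + s) (ofLex z)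

end Join

section GradedHelpers

lemma rank_lt_of_lt' {P : Type*} [PartialOrder P] [Fintype P] (ρ : P → ℕ)
    (hcov : ∀ x y : P, x ⋖ y → ρ y = ρ x + 1) :
    ∀ x y : P, x < y → ρ x < ρ y := by
  classical
  have hwf : WellFounded ((· > ·) : P → P → Prop) := (Finite.to_wellFoundedGT).wf
  intro x
  induction x using hwf.induction with
  | _ x IH =>
    intro y hxy
    obtain ⟨z, hz, hzmin⟩ := Finset.exists_minimal
      (s := Finset.univ.filter (fun w => x < w ∧ w ≤ y)) ⟨y, by simp [hxy]⟩
    simp only [Finset.mem_filter, Finset.mem_univ, true_and] at hz hzmin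
    have hcov' : x ⋖ z := ⟨hz.1, fun w hw hw' => hw'.not_ge (hzmin ⟨hw, hw'.le.trans hz.2⟩ hw'.le)⟩
    rcases eq_or_lt_of_le hz.2 with rfl | hlt
    · rw [hcov x z hcov']; omega
    · have := IH z hz.1 y hlt
      rw [hcov x z hcov'] at *
      omega

variable {P : Type*} [PartialOrder P] [Fintype P] [BoundedOrder P] {ρ : P → ℕ} {n : ℕ}

lemma rho_top (h : IsGradedOfRank ρ n) : ρ ⊤ = n := by
  obtain ⟨-, ⟨t, ht, hrt⟩, -⟩ := h
  rwa [ht.eq_top] at hrt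

lemma rho_bot (h : IsGradedOfRank ρ n) : ρ ⊥ = 0 := by
  obtain ⟨⟨b, hb, hrb⟩, -, -⟩ := h
  rwa [hb.eq_bot] at hrb

lemma rho_lt (h : IsGradedOfRank ρ n) {x y : P} (hxy : x < y) : ρ x < ρ y :=
  rank_lt_of_lt' ρ h.2.2 x y hxy

lemma rho_le_of_ne_top (h : IsGradedOfRank ρ (n + 1)) {x : P} (hx : x ≠ ⊤) : ρ x ≤ n := by
  have := rho_lt h hx.lt_top
  rw [rho_top h] at this; omega

lemma one_le_rho_of_ne_bot (h : IsGradedOfRank ρ (n + 1)) {x : P} (hx : x ≠ ⊥) : 1 ≤ ρ x := by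
  have := rho_lt h hx.bot_lt
  rw [rho_bot h] at this; omega

end GradedHelpers

lemma abWord_join (m k : ℕ) (A B : Finset ℕ) (hA : A ⊆ Finset.Icc 1 m) (hB : B ⊆ Finset.Icc 1 k) :
    abWord (m + k) (A ∪ B.image (· + m)) = abWord m A * abWord k B := by
  unfold abWord
  rw [List.range_add, List.map_append, List.prod_append, List.map_map]
  congr 1
  · refine congrArg List.prod (List.map_congr_left ?_)
    intro i hi
    rw [List.mem_range] at hi
    congr 1
    simp only [Finset.mem_union, Finset.mem_image, eq_iff_iff]
    constructor
    · rintro (h | ⟨b, hb, hbe⟩)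
      · exact h
      · have := (Finset.mem_Icc.1 (hB hb)).1; omega
    · exact Or.inl
  · refine congrArg List.prod (List.map_congr_left ?_)
    intro j hj
    rw [List.mem_range] at hj
    simp only [Function.comp_apply]
    congr 1
    simp only [Finset.mem_union, Finset.mem_image, eq_iff_iff]
    constructor
    · rintro (h | ⟨b, hb, hbe⟩)
      · have := (Finset.mem_Icc.1 (hA h)).2; omega
      · have : b = j + 1 := by omega
        rwa [this] at hb
    · intro h; exact Or.inr ⟨j + 1, h, by omega⟩

lemma posetJoin_inl_inj {P Q : Type*} [PartialOrder P] [PartialOrder Q] [OrderTop P]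
    [OrderBot Q] {x x' : {x : P // x ≠ ⊤}}
    (h : (toLex (Sum.inl x) : PosetJoin P Q) = toLex (Sum.inl x')) : x.1 = x'.1 := by
  have : x = x' := by simpa using h
  rw [this]

lemma posetJoin_inr_inj {P Q : Type*} [PartialOrder P] [PartialOrder Q] [OrderTop P]
    [OrderBot Q] {y y' : {y : Q // y ≠ ⊥}}
    (h : (toLex (Sum.inr y) : PosetJoin P Q) = toLex (Sum.inr y')) : y.1 = y'.1 := by
  have : y = y' := by simpa using h
  rw [this]

lemma flagAlpha_join {P Q : Type*} [PartialOrder P] [PartialOrder Q] [Fintype P] [Fintype Q]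
    [BoundedOrder P] [BoundedOrder Q] {ρP : P → ℕ} {ρQ : Q → ℕ} {m k : ℕ}
    (hP : IsGradedOfRank ρP (m + 1)) (hQ : IsGradedOfRank ρQ (k + 1))
    (A B : Finset ℕ) (hA : A ⊆ Finset.Icc 1 m) (hB : B ⊆ Finset.Icc 1 k) :
    flagAlpha (joinRank ρP ρQ m) (A ∪ B.image (· + m)) = flagAlpha ρP A * flagAlpha ρQ B := by
  classical
  set ρJ : PosetJoin P Q → ℕ := joinRank ρP ρQ m with hρJ
  set S : Finset ℕ := A ∪ B.image (· + m) with hSdef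
  -- rank facts
  have hPtop : ρP ⊤ = m + 1 := rho_top hP
  have hPle : ∀ {x : P}, x ≠ ⊤ → ρP x ≤ m := fun hx => rho_le_of_ne_top hP hx
  have hQge : ∀ {y : Q}, y ≠ ⊥ → 1 ≤ ρQ y := fun hy => one_le_rho_of_ne_bot hQ hy
  have hbne : (⊥ : P) ≠ ⊤ := by
    intro h
    have h0 := rho_bot hP
    rw [h, hPtop] at h0; omega
  haveI : Nonempty (PosetJoin P Q) := ⟨toLex (Sum.inl ⟨⊥, hbne⟩)⟩
  -- range facts about A and B
  have hAm : ∀ v ∈ A, 1 ≤ v ∧ v ≤ m := fun v hv => Finset.mem_Icc.1 (hA hv)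
  have hBk : ∀ v ∈ B, 1 ≤ v ∧ v ≤ k := fun v hv => Finset.mem_Icc.1 (hB hv)
  have hSA : ∀ v ∈ S, v ≤ m → v ∈ A := by
    intro v hv hvm
    rcases Finset.mem_union.1 hv with h | h
    · exact h
    · obtain ⟨b, hb, rfl⟩ := Finset.mem_image.1 h
      have := (hBk b hb).1; omega
  have hSB : ∀ v ∈ S, m + 1 ≤ v → v - m ∈ B := by
    intro v hv hvm
    rcases Finset.mem_union.1 hv with h | h
    · have := (hAm v h).2; omega
    · obtain ⟨b, hb, rfl⟩ := Finset.mem_image.1 h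
      simpa using hb
  -- encoding maps
  set e₁ : P → PosetJoin P Q :=
    fun x => if h : x = ⊤ then Classical.arbitrary _ else toLex (Sum.inl ⟨x, h⟩) with he₁def
  set e₂ : Q → PosetJoin P Q :=
    fun y => if h : y = ⊥ then Classical.arbitrary _ else toLex (Sum.inr ⟨y, h⟩) with he₂def
  have he₁ : ∀ {x : P} (h : x ≠ ⊤), e₁ x = toLex (Sum.inl ⟨x, h⟩) := fun h => dif_neg h
  have he₂ : ∀ {y : Q} (h : y ≠ ⊥), e₂ y = toLex (Sum.inr ⟨y, h⟩) := fun h => dif_neg h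
  have hρ₁ : ∀ {x : P}, x ≠ ⊤ → ρJ (e₁ x) = ρP x := by
    intro x h; rw [he₁ h]; rfl
  have hρ₂ : ∀ {y : Q}, y ≠ ⊥ → ρJ (e₂ y) = ρQ y + m := by
    intro y h; rw [he₂ h]; rfl
  set F : Finset P × Finset Q → Finset (PosetJoin P Q) :=
    fun C => C.1.image e₁ ∪ C.2.image e₂ with hFdef
  -- the three chain sets
  set X : Set (Finset (PosetJoin P Q)) :=
    {C | IsChain (· ≤ ·) (C : Set (PosetJoin P Q)) ∧ C.image ρJ = S} with hXdef
  set Y : Set (Finset P) := {C | IsChain (· ≤ ·) (C : Set P) ∧ C.image ρP = A} with hYdef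
  set Z : Set (Finset Q) := {C | IsChain (· ≤ ·) (C : Set Q) ∧ C.image ρQ = B} with hZdef
  -- elements of members of Y avoid ⊤; of Z avoid ⊥
  have hYne : ∀ C₁ ∈ Y, ∀ x ∈ C₁, x ≠ ⊤ := by
    intro C₁ hC₁ x hx h
    have hxA : ρP x ∈ A := by
      rw [← hC₁.2]; exact Finset.mem_image_of_mem _ hx
    rw [h, hPtop] at hxA
    have := (hAm _ hxA).2; omega
  have hZne : ∀ C₂ ∈ Z, ∀ y ∈ C₂, y ≠ ⊥ := by
    intro C₂ hC₂ y hy h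
    have hyB : ρQ y ∈ B := by
      rw [← hC₂.2]; exact Finset.mem_image_of_mem _ hy
    rw [h, rho_bot hQ] at hyB
    have := (hBk _ hyB).1; omega
  -- Step 1: F maps Y ×ˢ Z into X
  have hmaps : ∀ p ∈ Y ×ˢ Z, F p ∈ X := by
    rintro ⟨C₁, C₂⟩ hp
    obtain ⟨hY1, hZ1⟩ := Set.mem_prod.1 hp
    have hne₁ := hYne C₁ hY1
    have hne₂ := hZne C₂ hZ1
    constructor
    · -- chain
      intro z hz z' hz' hne
      simp only [hFdef, Finset.coe_union, Set.mem_union, Finset.coe_image,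
        Set.mem_image, Finset.mem_coe] at hz hz'
      rcases hz with ⟨x, hx, rfl⟩ | ⟨y, hy, rfl⟩ <;>
        rcases hz' with ⟨x', hx', rfl⟩ | ⟨y', hy', rfl⟩
      · have hxx : x ≠ x' := fun h => hne (by rw [h])
        rw [he₁ (hne₁ x hx), he₁ (hne₁ x' hx')]
        rcases hY1.1 hx hx' hxx with h | h
        · exact Or.inl (Sum.Lex.inl_le_inl_iff.2 h)
        · exact Or.inr (Sum.Lex.inl_le_inl_iff.2 h)
      · rw [he₁ (hne₁ x hx), he₂ (hne₂ y' hy')]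
        exact Or.inl (Sum.Lex.inl_le_inr _ _)
      · rw [he₁ (hne₁ x' hx'), he₂ (hne₂ y hy)]
        exact Or.inr (Sum.Lex.inl_le_inr _ _)
      · have hyy : y ≠ y' := fun h => hne (by rw [h])
        rw [he₂ (hne₂ y hy), he₂ (hne₂ y' hy')]
        rcases hZ1.1 hy hy' hyy with h | h
        · exact Or.inl (Sum.Lex.inr_le_inr_iff.2 h)
        · exact Or.inr (Sum.Lex.inr_le_inr_iff.2 h)
    · -- image
      simp only [hFdef]
      rw [Finset.image_union, Finset.image_image, Finset.image_image]
      have h1 : C₁.image (ρJ ∘ e₁) = C₁.image ρP :=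
        Finset.image_congr (fun x hx => hρ₁ (hne₁ x hx))
      have h2 : C₂.image (ρJ ∘ e₂) = C₂.image ((· + m) ∘ ρQ) :=
        Finset.image_congr (fun y hy => hρ₂ (hne₂ y hy))
      rw [h1, h2, ← Finset.image_image, hY1.2, hZ1.2]
  -- Step 2: F is injective on Y ×ˢ Z
  have hinj : Set.InjOn F (Y ×ˢ Z) := by
    rintro ⟨C₁, C₂⟩ hp ⟨C₁', C₂'⟩ hp' heq
    obtain ⟨hY1, hZ1⟩ := Set.mem_prod.1 hp
    obtain ⟨hY1', hZ1'⟩ := Set.mem_prod.1 hp'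
    have key : ∀ (D₁ D₂ : Finset P) (E₁ E₂ : Finset Q),
        (∀ x ∈ D₁, x ≠ ⊤) → (∀ x ∈ D₂, x ≠ ⊤) → (∀ y ∈ E₂, y ≠ ⊥) →
        F (D₁, E₁) = F (D₂, E₂) → D₁ ⊆ D₂ := by
      intro D₁ D₂ E₁ E₂ h1 h2 h3 he x hx
      have : e₁ x ∈ F (D₂, E₂) := by
        rw [← he]; exact Finset.mem_union_left _ (Finset.mem_image_of_mem _ hx)
      rcases Finset.mem_union.1 this with h | h
      · obtain ⟨x', hx', hxe⟩ := Finset.mem_image.1 h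
        rw [he₁ (h1 x hx), he₁ (h2 x' hx')] at hxe
        have : x' = x := posetJoin_inl_inj hxe
        rwa [← this]
      · obtain ⟨y', hy', hye⟩ := Finset.mem_image.1 h
        rw [he₁ (h1 x hx), he₂ (h3 y' hy')] at hye
        exact (Sum.inr_ne_inl (show Sum.inr _ = Sum.inl _ from hye)).elim
    have key2 : ∀ (D₁ D₂ : Finset P) (E₁ E₂ : Finset Q),
        (∀ x ∈ D₂, x ≠ ⊤) → (∀ y ∈ E₁, y ≠ ⊥) → (∀ y ∈ E₂, y ≠ ⊥) →
        F (D₁, E₁) = F (D₂, E₂) → E₁ ⊆ E₂ := by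
      intro D₁ D₂ E₁ E₂ h1 h2 h3 he y hy
      have : e₂ y ∈ F (D₂, E₂) := by
        rw [← he]; exact Finset.mem_union_right _ (Finset.mem_image_of_mem _ hy)
      rcases Finset.mem_union.1 this with h | h
      · obtain ⟨x', hx', hxe⟩ := Finset.mem_image.1 h
        rw [he₂ (h2 y hy), he₁ (h1 x' hx')] at hxe
        exact (Sum.inl_ne_inr (show Sum.inl _ = Sum.inr _ from hxe)).elim
      · obtain ⟨y', hy', hye⟩ := Finset.mem_image.1 h
        rw [he₂ (h2 y hy), he₂ (h3 y' hy')] at hye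
        have : y' = y := posetJoin_inr_inj hye
        rwa [← this]
    have e1 : C₁ = C₁' :=
      le_antisymm (key C₁ C₁' C₂ C₂' (hYne _ hY1) (hYne _ hY1') (hZne _ hZ1') heq)
        (key C₁' C₁ C₂' C₂ (hYne _ hY1') (hYne _ hY1) (hZne _ hZ1) heq.symm)
    have e2 : C₂ = C₂' :=
      le_antisymm (key2 C₁ C₁' C₂ C₂' (hYne _ hY1') (hZne _ hZ1) (hZne _ hZ1') heq)
        (key2 C₁' C₁ C₂' C₂ (hYne _ hY1) (hZne _ hZ1') (hZne _ hZ1) heq.symm)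
    rw [Prod.mk.injEq]
    exact ⟨e1, e2⟩
  -- Step 3: F is surjective onto X
  have hsurj : ∀ C ∈ X, ∃ p ∈ Y ×ˢ Z, F p = C := by
    intro C hC
    obtain ⟨hCchain, hCimg⟩ := hC
    set C₁ : Finset P := Finset.univ.filter
      (fun x : P => ∃ h : x ≠ ⊤, toLex (Sum.inl ⟨x, h⟩) ∈ C) with hC₁def
    set C₂ : Finset Q := Finset.univ.filter
      (fun y : Q => ∃ h : y ≠ ⊥, toLex (Sum.inr ⟨y, h⟩) ∈ C) with hC₂def
    have hmem₁ : ∀ x : P, x ∈ C₁ ↔ ∃ h : x ≠ ⊤, toLex (Sum.inl ⟨x, h⟩) ∈ C := by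
      intro x; simp [hC₁def]
    have hmem₂ : ∀ y : Q, y ∈ C₂ ↔ ∃ h : y ≠ ⊥, toLex (Sum.inr ⟨y, h⟩) ∈ C := by
      intro y; simp [hC₂def]
    refine ⟨(C₁, C₂), Set.mem_prod.2 ⟨⟨?_, ?_⟩, ⟨?_, ?_⟩⟩, ?_⟩
    · -- C₁ chain
      intro x hx x' hx' hne
      obtain ⟨h1, hz1⟩ := (hmem₁ x).1 hx
      obtain ⟨h1', hz1'⟩ := (hmem₁ x').1 hx'
      have hzz : (toLex (Sum.inl ⟨x, h1⟩) : PosetJoin P Q) ≠ toLex (Sum.inl ⟨x', h1'⟩) := by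
        intro h; exact hne (by simpa using h)
      rcases hCchain hz1 hz1' hzz with h | h
      · have h' := Sum.Lex.inl_le_inl_iff.1 h
        exact Or.inl h'
      · have h' := Sum.Lex.inl_le_inl_iff.1 h
        exact Or.inr h'
    · -- C₁ image = A
      ext v
      simp only [Finset.mem_image]
      constructor
      · rintro ⟨x, hx, rfl⟩
        obtain ⟨h1, hz1⟩ := (hmem₁ x).1 hx
        have : ρP x ∈ S := by
          rw [← hCimg]
          exact Finset.mem_image_of_mem _ hz1
        exact hSA _ this (hPle h1)
      · intro hv
        have : v ∈ S := Finset.mem_union_left _ hv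
        rw [← hCimg] at this
        obtain ⟨z, hz, hzv⟩ := Finset.mem_image.1 this
        obtain x | y := z
        · refine ⟨x.1, (hmem₁ x.1).2 ⟨x.2, hz⟩, hzv⟩
        · exfalso
          have h1 : ρQ y.1 + m = v := hzv
          have := hQge y.2
          have := (hAm v hv).2
          omega
    · -- C₂ chain
      intro y hy y' hy' hne
      obtain ⟨h1, hz1⟩ := (hmem₂ y).1 hy
      obtain ⟨h1', hz1'⟩ := (hmem₂ y').1 hy'
      have hzz : (toLex (Sum.inr ⟨y, h1⟩) : PosetJoin P Q) ≠ toLex (Sum.inr ⟨y', h1'⟩) := by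
        intro h; exact hne (by simpa using h)
      rcases hCchain hz1 hz1' hzz with h | h
      · have h' := Sum.Lex.inr_le_inr_iff.1 h
        exact Or.inl h'
      · have h' := Sum.Lex.inr_le_inr_iff.1 h
        exact Or.inr h'
    · -- C₂ image = B
      ext v
      simp only [Finset.mem_image]
      constructor
      · rintro ⟨y, hy, rfl⟩
        obtain ⟨h1, hz1⟩ := (hmem₂ y).1 hy
        have hmemS : ρQ y + m ∈ S := by
          rw [← hCimg]
          exact Finset.mem_image_of_mem _ hz1
        have := hQge h1
        have := hSB _ hmemS (by omega)
        simpa using this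
      · intro hv
        have hv1 := (hBk v hv).1
        have : v + m ∈ S := Finset.mem_union_right _ (Finset.mem_image_of_mem _ hv)
        rw [← hCimg] at this
        obtain ⟨z, hz, hzv⟩ := Finset.mem_image.1 this
        obtain x | y := z
        · exfalso
          have h1 : ρP x.1 = v + m := hzv
          have := hPle x.2
          omega
        · have h1 : ρQ y.1 + m = v + m := hzv
          exact ⟨y.1, (hmem₂ y.1).2 ⟨y.2, hz⟩, by omega⟩
    · -- F (C₁, C₂) = C
      ext z
      simp only [hFdef, Finset.mem_union, Finset.mem_image]
      constructor
      · rintro (⟨x, hx, rfl⟩ | ⟨y, hy, rfl⟩)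
        · obtain ⟨h1, hz1⟩ := (hmem₁ x).1 hx
          rwa [he₁ h1]
        · obtain ⟨h1, hz1⟩ := (hmem₂ y).1 hy
          rwa [he₂ h1]
      · intro hz
        obtain x | y := z
        · exact Or.inl ⟨x.1, (hmem₁ x.1).2 ⟨x.2, hz⟩, he₁ x.2⟩
        · exact Or.inr ⟨y.1, (hmem₂ y.1).2 ⟨y.2, hz⟩, he₂ y.2⟩
  -- conclude via cardinalities
  have hXeq : X = F '' (Y ×ˢ Z) := by
    apply Set.eq_of_subset_of_subset
    · intro C hC
      obtain ⟨p, hp, hpe⟩ := hsurj C hC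
      exact ⟨p, hp, hpe⟩
    · rintro _ ⟨p, hp, rfl⟩
      exact hmaps p hp
  show X.ncard = Y.ncard * Z.ncard
  rw [hXeq, Set.ncard_image_of_injOn hinj, ← Nat.card_coe_set_eq,
    ← Nat.card_coe_set_eq, ← Nat.card_coe_set_eq,
    Nat.card_congr (Equiv.Set.prod Y Z), Nat.card_prod]

/-- For finite graded posets `P` and `Q` with `0̂` and `1̂` (of ranks `m+1`
and `k+1`), the flag polynomial of the join `P * Q` equals the product of the flag
polynomials: `Υ_{P*Q}(a,b) = Υ_P(a,b) · Υ_Q(a,b)` in `ℤ⟨a,b⟩`. -/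
theorem flagPoly_join {P Q : Type*} [PartialOrder P] [PartialOrder Q] [Fintype P] [Fintype Q]
    [BoundedOrder P] [BoundedOrder Q] (ρP : P → ℕ) (ρQ : Q → ℕ) (m k : ℕ)
    (hP : IsGradedOfRank ρP (m + 1)) (hQ : IsGradedOfRank ρQ (k + 1)) :
    flagPoly (joinRank ρP ρQ m) (m + k) = flagPoly ρP m * flagPoly ρQ k := by
  classical
  unfold flagPoly
  rw [Finset.sum_mul_sum, ← Finset.sum_product']
  refine (Finset.sum_nbij'
    (i := fun p : Finset ℕ × Finset ℕ => p.1 ∪ p.2.image (· + m))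
    (j := fun S => (S ∩ Finset.Icc 1 m, (S.filter (fun v => m < v)).image (· - m)))
    ?_ ?_ ?_ ?_ ?_).symm
  · -- encode lands in powerset
    rintro ⟨A, B⟩ hp
    rw [Finset.mem_product, Finset.mem_powerset, Finset.mem_powerset] at hp
    obtain ⟨hA, hB⟩ := hp
    rw [Finset.mem_powerset]
    intro v hv
    rcases Finset.mem_union.1 hv with h | h
    · have := Finset.mem_Icc.1 (hA h); rw [Finset.mem_Icc]; omega
    · obtain ⟨b, hb, rfl⟩ := Finset.mem_image.1 h
      have := Finset.mem_Icc.1 (hB hb); rw [Finset.mem_Icc]; omega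
  · -- decode lands in product
    intro S hS
    rw [Finset.mem_powerset] at hS
    rw [Finset.mem_product, Finset.mem_powerset, Finset.mem_powerset]
    constructor
    · exact Finset.inter_subset_right
    · intro v hv
      obtain ⟨w, hw, rfl⟩ := Finset.mem_image.1 hv
      rw [Finset.mem_filter] at hw
      have := Finset.mem_Icc.1 (hS hw.1)
      have := hw.2
      rw [Finset.mem_Icc]; omega
  · -- left inverse
    rintro ⟨A, B⟩ hp
    rw [Finset.mem_product, Finset.mem_powerset, Finset.mem_powerset] at hp
    obtain ⟨hA, hB⟩ := hp
    have h1 : (A ∪ B.image (· + m)) ∩ Finset.Icc 1 m = A := by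
      ext v
      simp only [Finset.mem_inter, Finset.mem_union, Finset.mem_image, Finset.mem_Icc]
      constructor
      · rintro ⟨h | ⟨b, hb, rfl⟩, h1, h2⟩
        · exact h
        · have := Finset.mem_Icc.1 (hB hb); omega
      · intro hv
        have := Finset.mem_Icc.1 (hA hv)
        exact ⟨Or.inl hv, this⟩
    have h2 : ((A ∪ B.image (· + m)).filter (fun v => m < v)).image (· - m) = B := by
      ext v
      simp only [Finset.mem_image, Finset.mem_filter, Finset.mem_union]
      constructor
      · rintro ⟨w, ⟨hw | ⟨b, hb, rfl⟩, hmw⟩, rfl⟩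
        · have := Finset.mem_Icc.1 (hA hw); omega
        · have he : b + m - m = b := by omega
          rwa [he]
      · intro hv
        have := Finset.mem_Icc.1 (hB hv)
        exact ⟨v + m, ⟨Or.inr ⟨v, hv, rfl⟩, by omega⟩, by omega⟩
    exact Prod.ext h1 h2
  · -- right inverse
    intro S hS
    rw [Finset.mem_powerset] at hS
    ext v
    simp only [Finset.mem_union, Finset.mem_inter, Finset.mem_Icc, Finset.mem_image,
      Finset.mem_filter]
    constructor
    · rintro (⟨hv, -⟩ | ⟨w, ⟨w', ⟨hw', hmw'⟩, rfl⟩, rfl⟩)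
      · exact hv
      · have he : w' - m + m = w' := by omega
        rwa [he]
    · intro hv
      have hb := Finset.mem_Icc.1 (hS hv)
      by_cases hm : v ≤ m
      · exact Or.inl ⟨hv, hb.1, hm⟩
      · exact Or.inr ⟨v - m, ⟨v, ⟨hv, by omega⟩, rfl⟩, by omega⟩
  · -- term equality
    rintro ⟨A, B⟩ hp
    rw [Finset.mem_product, Finset.mem_powerset, Finset.mem_powerset] at hp
    obtain ⟨hA, hB⟩ := hp
    show ((flagAlpha ρP A : ℤ) • abWord m A) * ((flagAlpha ρQ B : ℤ) • abWord k B) =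
      (flagAlpha (joinRank ρP ρQ m) (A ∪ B.image (· + m)) : ℤ) •
        abWord (m + k) (A ∪ B.image (· + m))
    rw [flagAlpha_join hP hQ A B hA hB, abWord_join m k A B hA hB, Nat.cast_mul,
      smul_mul_assoc, mul_smul_comm, smul_smul]
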